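/- Let μ : ℝ≥0 → ℝ be continuous and let G_ε(c, t) = ∫_{c−ℓ}^{c+ℓ} exp(−(x − μ(t))²/(2ε²)) dx, with ℓ > 0. Then for every t, the choice c = μ(t) maximizes G_ε(c,t) over c ∈ ℝ, and hence for any weight α(t) ≥ 0 with ∫₀^∞ α(t) G_ε(μ(t), t) dt < ∞, the functional c(·) ↦ ∫₀^∞ α(t) G_ε(c(t), t) dt over continuous c is maximized by c(t) = μ(t). -/

import Mathlib

open MeasureTheory Real Set

lemma gauss_shift_le_nonneg (ℓ ε : ℝ) (hℓ : 0 < ℓ) (hε : 0 < ε) (d : ℝ) (hd : 0 ≤ d) :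
    (∫ x in (d-ℓ)..(d+ℓ), Real.exp (-x^2 / (2 * ε^2))) ≤
      ∫ x in (-ℓ)..ℓ, Real.exp (-x^2 / (2 * ε^2)) := by
  set f : ℝ → ℝ := fun x => Real.exp (-x^2 / (2 * ε^2)) with hf
  have hcont : Continuous f := by fun_prop
  have hint : ∀ a b : ℝ, IntervalIntegrable f volume a b := fun a b =>
    hcont.intervalIntegrable a b
  have key : (∫ x in ℓ..(d+ℓ), f x) ≤ ∫ x in (-ℓ)..(d-ℓ), f x := by
    have hshift : (∫ x in (-ℓ)..(d-ℓ), f (x + 2*ℓ)) = ∫ x in ℓ..(d+ℓ), f x := by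
      rw [intervalIntegral.integral_comp_add_right f (2*ℓ)]
      ring_nf
    rw [← hshift]
    apply intervalIntegral.integral_mono_on (by linarith)
      ((hcont.comp (by continuity)).intervalIntegrable _ _) (hint _ _)
    intro x hx
    have hx1 : -ℓ ≤ x := hx.1
    have h2 : x^2 ≤ (x + 2*ℓ)^2 := by nlinarith
    apply Real.exp_le_exp.mpr
    have hpos : (0:ℝ) < 2 * ε^2 := by positivity
    exact div_le_div_of_nonneg_right (by linarith : -(x + 2*ℓ)^2 ≤ -x^2) hpos.le
  have e1 : (∫ x in (d-ℓ)..(d+ℓ), f x) = (∫ x in (d-ℓ)..ℓ, f x) + ∫ x in ℓ..(d+ℓ), f x :=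
    (intervalIntegral.integral_add_adjacent_intervals (hint _ _) (hint _ _)).symm
  have e2 : (∫ x in (-ℓ)..ℓ, f x) = (∫ x in (-ℓ)..(d-ℓ), f x) + ∫ x in (d-ℓ)..ℓ, f x :=
    (intervalIntegral.integral_add_adjacent_intervals (hint _ _) (hint _ _)).symm
  rw [e1, e2]; linarith

lemma gauss_shift_le (ℓ ε : ℝ) (hℓ : 0 < ℓ) (hε : 0 < ε) (d : ℝ) :
    (∫ x in (d-ℓ)..(d+ℓ), Real.exp (-x^2 / (2 * ε^2))) ≤
      ∫ x in (-ℓ)..ℓ, Real.exp (-x^2 / (2 * ε^2)) := by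
  rcases le_or_gt 0 d with hd | hd
  · exact gauss_shift_le_nonneg ℓ ε hℓ hε d hd
  · have heven : (∫ x in (d-ℓ)..(d+ℓ), Real.exp (-x^2 / (2 * ε^2)))
        = ∫ x in (-d-ℓ)..(-d+ℓ), Real.exp (-x^2 / (2 * ε^2)) := by
      have : (∫ x in (d-ℓ)..(d+ℓ), Real.exp (-x^2 / (2 * ε^2)))
          = ∫ x in (d-ℓ)..(d+ℓ), Real.exp (-(-x)^2 / (2 * ε^2)) := by
        apply intervalIntegral.integral_congr
        intro x _; ring_nf
      rw [this, intervalIntegral.integral_comp_neg (fun x => Real.exp (-x^2 / (2 * ε^2)))]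
      congr 1 <;> ring
    rw [heven]
    exact gauss_shift_le_nonneg ℓ ε hℓ hε (-d) (by linarith)

lemma icc_gauss_le (ℓ ε : ℝ) (hℓ : 0 < ℓ) (hε : 0 < ε) (m c : ℝ) :
    (∫ x in Set.Icc (c - ℓ) (c + ℓ), Real.exp (-(x - m)^2 / (2 * ε^2))) ≤
      ∫ x in Set.Icc (m - ℓ) (m + ℓ), Real.exp (-(x - m)^2 / (2 * ε^2)) := by
  have hIcc : ∀ a : ℝ, (∫ x in Set.Icc (a - ℓ) (a + ℓ), Real.exp (-(x - m)^2 / (2 * ε^2)))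
      = ∫ x in ((a - m) - ℓ)..((a - m) + ℓ), Real.exp (-x^2 / (2 * ε^2)) := by
    intro a
    rw [MeasureTheory.integral_Icc_eq_integral_Ioc,
      ← intervalIntegral.integral_of_le (by linarith : a - ℓ ≤ a + ℓ)]
    have := intervalIntegral.integral_comp_sub_right
      (fun x => Real.exp (-x^2 / (2 * ε^2))) m (a := a - ℓ) (b := a + ℓ)
    rw [this]
    congr 1 <;> ring
  rw [hIcc c, hIcc m]
  have h0 : (∫ x in ((m - m) - ℓ)..((m - m) + ℓ), Real.exp (-x^2 / (2 * ε^2)))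
      = ∫ x in (-ℓ)..ℓ, Real.exp (-x^2 / (2 * ε^2)) := by norm_num
  rw [h0]
  exact gauss_shift_le ℓ ε hℓ hε (c - m)

theorem tracking_minimizer_maximizes_mtll_integral
    (ℓ ε : ℝ) (hℓ : 0 < ℓ) (hε : 0 < ε)
    (μ : ℝ → ℝ) (hμ : Continuous μ)
    (α : ℝ → ℝ) (hα : ∀ t, 0 ≤ α t)
    (hfin : ∫⁻ t in Set.Ioi (0:ℝ),
        ENNReal.ofReal (α t * ∫ x in Set.Icc (μ t - ℓ) (μ t + ℓ),
          Real.exp (-(x - μ t)^2 / (2 * ε^2))) < ⊤) :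
    (∀ t c : ℝ,
      (∫ x in Set.Icc (c - ℓ) (c + ℓ), Real.exp (-(x - μ t)^2 / (2 * ε^2))) ≤
        ∫ x in Set.Icc (μ t - ℓ) (μ t + ℓ), Real.exp (-(x - μ t)^2 / (2 * ε^2))) ∧
    (∀ c : ℝ → ℝ, Continuous c →
      (∫⁻ t in Set.Ioi (0:ℝ),
          ENNReal.ofReal (α t * ∫ x in Set.Icc (c t - ℓ) (c t + ℓ),
            Real.exp (-(x - μ t)^2 / (2 * ε^2)))) ≤
        ∫⁻ t in Set.Ioi (0:ℝ),
          ENNReal.ofReal (α t * ∫ x in Set.Icc (μ t - ℓ) (μ t + ℓ),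
            Real.exp (-(x - μ t)^2 / (2 * ε^2)))) := by
  constructor
  · intro t c
    exact icc_gauss_le ℓ ε hℓ hε (μ t) c
  · intro c _
    apply lintegral_mono
    intro t
    exact ENNReal.ofReal_le_ofReal
      (mul_le_mul_of_nonneg_left (icc_gauss_le ℓ ε hℓ hε (μ t) (c t)) (hα t))
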